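/- Let g be a monic complex polynomial of degree at least k all of whose roots lie in the closed disk of radius s/2 centered at w₀ - s/2, where -ε < w₀ < -ε/2 and ε > 0, s ≥ 0. Then |g'(0)/g(0)| ≥ k/(ε + s). -/

import Mathlib

open Polynomial Metric


lemma aux_re_bound (ε s w₀ : ℝ) (hε : 0 < ε) (hs : 0 ≤ s)
    (hw₁ : -ε < w₀) (hw₂ : w₀ < -ε / 2) (x : ℂ)
    (hx : x ∈ closedBall ((w₀ : ℂ) - s / 2) (s / 2)) :
    1 / (ε + s) ≤ ((-x)⁻¹).re ∧ x.re ≤ w₀ := by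
  have hd : ‖x - ((w₀ : ℂ) - s / 2)‖ ≤ s / 2 := by
    have := mem_closedBall.mp hx
    rwa [Complex.dist_eq] at this
  have hd2 : (x.re - (w₀ - s / 2)) ^ 2 + x.im ^ 2 ≤ (s / 2) ^ 2 := by
    have h2 : ‖x - ((w₀ : ℂ) - s / 2)‖ ^ 2 ≤ (s / 2) ^ 2 := by
      have := norm_nonneg (x - ((w₀ : ℂ) - s / 2))
      nlinarith
    rw [Complex.sq_norm, Complex.normSq_apply] at h2
    have hre : (x - ((w₀ : ℂ) - s / 2)).re = x.re - (w₀ - s / 2) := by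
      simp
    have him : (x - ((w₀ : ℂ) - s / 2)).im = x.im := by simp
    rw [hre, him] at h2
    nlinarith [h2]
  have hxre : x.re ≤ w₀ := by nlinarith [sq_nonneg x.im, sq_nonneg (x.re - w₀)]
  refine ⟨?_, hxre⟩
  have hxlt : x.re < 0 := by linarith
  have hpos : 0 < x.re ^ 2 + x.im ^ 2 := by nlinarith [sq_nonneg x.im]
  have hεs : 0 < ε + s := by linarith
  have hinvre : ((-x)⁻¹).re = -x.re / (x.re ^ 2 + x.im ^ 2) := by
    rw [Complex.inv_re, Complex.normSq_apply]
    simp [neg_div]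
    ring_nf
  rw [hinvre, div_le_div_iff₀ hεs hpos]
  nlinarith [mul_nonneg (by nlinarith [sq_nonneg x.im, sq_nonneg (x.re - w₀ + s), sq_nonneg (x.re - w₀)] : (0:ℝ) ≤ x.re - (w₀ - s)) (by linarith : (0:ℝ) ≤ -(2*w₀+ε)),
    mul_pos (by linarith : (0:ℝ) < w₀ + ε) (by linarith : (0:ℝ) < s - w₀)]

lemma aux_logderiv (S : Multiset ℂ) (h : ∀ x ∈ S, x ≠ 0) :
    Polynomial.eval 0 (Polynomial.derivative (S.map (fun a => X - C a)).prod) /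
      Polynomial.eval 0 ((S.map (fun a => X - C a)).prod)
      = (S.map (fun x => (-x)⁻¹)).sum := by
  induction S using Multiset.induction with
  | empty => simp
  | cons x S ih =>
    have hx : x ≠ 0 := h x (Multiset.mem_cons_self x S)
    have hS : ∀ a ∈ S, a ≠ 0 := fun a ha => h a (Multiset.mem_cons_of_mem ha)
    have h0 : Polynomial.eval 0 ((S.map (fun a => X - C a)).prod) ≠ 0 := by
      rw [eval_multiset_prod]
      refine Multiset.prod_ne_zero ?_
      simp only [Multiset.mem_map]
      rintro ⟨q, hq, hq'⟩
      rcases hq with ⟨a, ha, rfl⟩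
      simp only [eval_sub, eval_X, eval_C, zero_sub, neg_eq_zero] at hq'
      exact hS a ha hq'
    simp only [Multiset.map_cons, Multiset.prod_cons, Multiset.sum_cons]
    rw [derivative_mul, derivative_X_sub_C, one_mul, eval_add, eval_mul,
      eval_sub, eval_X, eval_C, zero_sub]
    rw [← ih hS, inv_neg]
    field_simp
    simp only [eval_sub, eval_mul, eval_X, eval_C]
    ring

/-- If `g` is monic of degree at least `k` with all roots in the closed disk
of radius `s/2` centered at `w₀ - s/2`, where `-ε < w₀ < -ε/2`, `ε > 0`,
`s ≥ 0`, then `|g'(0)/g(0)| ≥ k/(ε+s)`. -/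
theorem stmt_14 (g : ℂ[X]) (hg : g.Monic) (k : ℕ) (hk : 0 < k)
    (hdeg : k ≤ g.natDegree) (ε s w₀ : ℝ) (hε : 0 < ε) (hs : 0 ≤ s)
    (hw₁ : -ε < w₀) (hw₂ : w₀ < -ε / 2)
    (hroots : ∀ x ∈ g.roots, x ∈ closedBall ((w₀ : ℂ) - s / 2) (s / 2)) :
    (k : ℝ) / (ε + s) ≤ ‖g.derivative.eval 0 / g.eval 0‖ := by
  classical
  have hεs : 0 < ε + s := by linarith
  have hsplits : g.Splits := IsAlgClosed.splits g
  have hcard : Multiset.card g.roots = g.natDegree := splits_iff_card_roots.mp hsplits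
  have hne0 : ∀ x ∈ g.roots, x ≠ 0 := by
    intro x hx hx0
    have := (aux_re_bound ε s w₀ hε hs hw₁ hw₂ x (hroots x hx)).2
    rw [hx0] at this
    simp at this
    linarith
  obtain ⟨M, hM⟩ : ∃ M, g.roots = M := ⟨_, rfl⟩
  have hprod : g = (M.map fun a => X - C a).prod := by
    rw [← hM]; exact hsplits.eq_prod_roots_of_monic hg
  have key : g.derivative.eval 0 / g.eval 0 = (M.map fun x => (-x)⁻¹).sum := by
    rw [hprod]
    exact aux_logderiv M (hM ▸ hne0)
  rw [key]
  have hre : (k : ℝ) / (ε + s) ≤ ((M.map fun x => (-x)⁻¹).sum).re := by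
    have hsum : ((M.map fun x => (-x)⁻¹).sum).re
        = ((M.map fun x => (-x)⁻¹).map Complex.re).sum := by
      exact (map_multiset_sum Complex.reAddGroupHom _ : _)
    rw [hsum, Multiset.map_map]
    have hbound : ∀ y ∈ M.map (Complex.re ∘ fun x => (-x)⁻¹), 1 / (ε + s) ≤ y := by
      intro y hy
      rcases Multiset.mem_map.mp hy with ⟨x, hx, rfl⟩
      exact (aux_re_bound ε s w₀ hε hs hw₁ hw₂ x (hroots x (hM ▸ hx))).1
    have h1 := Multiset.card_nsmul_le_sum hbound
    rw [Multiset.card_map] at h1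
    have hck : (k : ℝ) ≤ (Multiset.card M : ℝ) := by
      have : k ≤ Multiset.card M := by rw [← hM, hcard]; exact hdeg
      exact_mod_cast this
    calc (k : ℝ) / (ε + s) = (k : ℝ) * (1 / (ε + s)) := by ring
      _ ≤ (Multiset.card M : ℝ) * (1 / (ε + s)) := by
          apply mul_le_mul_of_nonneg_right hck; positivity
      _ = Multiset.card M • (1 / (ε + s)) := by rw [nsmul_eq_mul]
      _ ≤ _ := h1
  exact hre.trans (Complex.re_le_norm _)
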